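/- Let φ and φ^N be characteristic-type functions (φ(a−ib) = E[e^{(a−ib)X}], φ^N(a−ib) = E[e^{(a−ib)X^N}] for real a ∈ [0,1], b ∈ ℝ), and suppose there are constants C₀ > 0 and e_N ≥ 0 such that whenever C₀(1+b⁶)e_N ≤ 1 one has |φ(a−ib) − φ^N(a−ib)| ≤ 6C₀ φ(a)(1+b⁶) e_N. Let f̂ satisfy |f̂(b+ia)| ≤ C₁(1+|b|)^{−(1+δ)} for some C₁, δ > 0 with δ < 6, and assume the Fourier pricing identity E f(X) = (1/2π)∫_ℝ φ(a−iu) f̂(u+ia) du holds for both X and X^N. Then for L := e_N^{−1/(6+η)} with any η > 0 such that C₀(1+L⁶)e_N ≤ 1, one has |E f(X) − E f(X^N)| ≤ (1/2π)[ (2⁷·6C₀ C₁ φ(a) /(6−δ)) e_N^{(δ+η)/(6+η)} + (4C₁/δ)(3C₀+1)·2·φ(a) L^{−δ} ], and consequently |E f(X) − E f(X^N)| ≤ C e_N^{δ/(6+η)} for a constant C depending only on C₀, C₁, δ, φ(a). -/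

import Mathlib

open MeasureTheory Set Filter Topology

lemma aux_one_add_pow6 (x : ℝ) (hx : 0 ≤ x) : 1 + x ^ 6 ≤ (1 + x) ^ 6 := by
  nlinarith [pow_nonneg hx 2, pow_nonneg hx 3, pow_nonneg hx 4, pow_nonneg hx 5,
    pow_nonneg hx 6, sq_nonneg x]

lemma aux_integrable_one_add_abs {δ : ℝ} (hδ : 0 < δ) :
    Integrable (fun x : ℝ => (1 + |x|) ^ (-(1 + δ))) := by
  have h := integrable_one_add_norm (E := ℝ) (μ := volume) (r := 1 + δ) (by simp; linarith)
  simpa [Real.norm_eq_abs] using h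

lemma aux_integral_Ioi {δ : ℝ} (hδ : 0 < δ) {c : ℝ} (hc : 0 ≤ c) :
    ∫ x in Ioi c, (1 + x) ^ (-(1 + δ)) = (1 + c) ^ (-δ) / δ := by
  have hp : -(1 + δ) < -1 := by linarith
  have hderiv : ∀ x ∈ Ici c,
      HasDerivAt (fun t : ℝ => -(1 + t) ^ (-δ) / δ) ((1 + x) ^ (-(1 + δ))) x := by
    intro x hx
    have h1x : (0:ℝ) < 1 + x := by
      have : c ≤ x := hx
      linarith
    have hbase : HasDerivAt (fun t : ℝ => 1 + t) 1 x := (hasDerivAt_id x).const_add 1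
    have h2 := hbase.rpow_const (p := -δ) (Or.inl h1x.ne')
    have h3 := (h2.div_const δ).neg
    have h4 := h3
    rw [show (-fun x : ℝ => (1 + x) ^ (-δ) / δ) = (fun t : ℝ => -(1 + t) ^ (-δ) / δ) by
      funext t; rw [Pi.neg_apply, neg_div]] at h4
    refine h4.congr_deriv ?_
    rw [show -δ - 1 = -(1 + δ) by ring]
    field_simp
  have hint : IntegrableOn (fun x : ℝ => (1 + x) ^ (-(1 + δ))) (Ioi c) := by
    refine ((aux_integrable_one_add_abs hδ).integrableOn (s := Ioi c)).congr_fun ?_ measurableSet_Ioi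
    intro x hx
    have : (0:ℝ) ≤ x := le_of_lt (lt_of_le_of_lt hc hx)
    simp [abs_of_nonneg this]
  have htend : Tendsto (fun t : ℝ => -(1 + t) ^ (-δ) / δ) atTop (𝓝 (-(0:ℝ) / δ)) := by
    refine Tendsto.div_const ?_ δ
    refine Tendsto.neg ?_
    have h0 : Tendsto (fun t : ℝ => 1 + t) atTop atTop :=
      tendsto_atTop_add_const_left _ 1 tendsto_id
    exact (tendsto_rpow_neg_atTop hδ).comp h0
  have := integral_Ioi_of_hasDerivAt_of_tendsto' hderiv hint htend
  rw [this]
  have hδ' : δ ≠ 0 := hδ.ne'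
  field_simp
  ring

lemma aux_integral_full {δ : ℝ} (hδ : 0 < δ) :
    ∫ x : ℝ, (1 + |x|) ^ (-(1 + δ)) = 2 * (1 / δ) := by
  have h := integral_comp_abs (f := fun t : ℝ => (1 + t) ^ (-(1 + δ)))
  rw [show (fun x : ℝ => (1 + |x|) ^ (-(1 + δ))) =
      (fun x : ℝ => (fun t : ℝ => (1 + t) ^ (-(1 + δ))) |x|) from rfl] at *
  rw [h, aux_integral_Ioi hδ le_rfl]
  norm_num

lemma aux_integral_Icc {δ L : ℝ} (hδ6 : δ < 6) (hL : 0 ≤ L) :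
    ∫ x in Icc (-L) L, (1 + |x|) ^ (5 - δ) = 2 * ((1 + L) ^ (6 - δ) - 1) / (6 - δ) := by
  have hcont : Continuous (fun x : ℝ => (1 + |x|) ^ (5 - δ)) := by
    refine Continuous.rpow_const (by continuity) (fun x => Or.inl ?_)
    positivity
  have h1 : ∫ x in Icc (-L) L, (1 + |x|) ^ (5 - δ) = ∫ x in (-L)..L, (1 + |x|) ^ (5 - δ) := by
    rw [intervalIntegral.integral_of_le (by linarith), integral_Icc_eq_integral_Ioc]
  have hsym : ∫ x in (-L)..(0:ℝ), (1 + |x|) ^ (5 - δ) = ∫ x in (0:ℝ)..L, (1 + |x|) ^ (5 - δ) := by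
    have := intervalIntegral.integral_comp_neg (a := (0:ℝ)) (b := L)
      (fun x : ℝ => (1 + |x|) ^ (5 - δ))
    simp only [abs_neg, neg_zero] at this
    exact this.symm
  have hadj : (∫ x in (-L)..(0:ℝ), (1 + |x|) ^ (5 - δ)) + (∫ x in (0:ℝ)..L, (1 + |x|) ^ (5 - δ))
      = ∫ x in (-L)..L, (1 + |x|) ^ (5 - δ) :=
    intervalIntegral.integral_add_adjacent_intervals (μ := volume)
      (hcont.intervalIntegrable (-L) 0) (hcont.intervalIntegrable 0 L)
  have hhalf : ∫ x in (0:ℝ)..L, (1 + |x|) ^ (5 - δ) = ((1 + L) ^ (6 - δ) - 1) / (6 - δ) := by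
    have hcongr : ∫ x in (0:ℝ)..L, (1 + |x|) ^ (5 - δ) = ∫ x in (0:ℝ)..L, (1 + x) ^ (5 - δ) := by
      refine intervalIntegral.integral_congr (fun x hx => ?_)
      rw [Set.uIcc_of_le hL] at hx
      rw [abs_of_nonneg hx.1]
    have hshift : ∫ x in (0:ℝ)..L, (1 + x) ^ (5 - δ) = ∫ u in (1:ℝ)..(1 + L), u ^ (5 - δ) := by
      have := intervalIntegral.integral_comp_add_left (a := (0:ℝ)) (b := L)
        (fun u : ℝ => u ^ (5 - δ)) 1
      simpa using this
    rw [hcongr, hshift, integral_rpow (Or.inl (by linarith))]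
    rw [show 5 - δ + 1 = 6 - δ by ring, Real.one_rpow]
  rw [h1, ← hadj, hsym, hhalf]
  ring

set_option maxHeartbeats 1000000 in
theorem weak_error_fourier_bound {Ω : Type*} [MeasurableSpace Ω]
    (μ : Measure Ω) [IsProbabilityMeasure μ]
    (X XN : Ω → ℝ) (f : ℝ → ℝ) (fhat φ φN : ℂ → ℂ)
    (a C₀ C₁ δ η eN φa L : ℝ)
    (ha : a ∈ Set.Icc (0:ℝ) 1)
    (hC₀ : 0 < C₀) (hC₁ : 0 < C₁) (hδ : 0 < δ) (hδ6 : δ < 6) (hη : 0 < η)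
    (heN : 0 < eN)
    (hLdef : L = eN ^ (-(1 / (6 + η))))
    (hsmall : C₀ * (1 + L ^ 6) * eN ≤ 1)
    (hφa : 0 ≤ φa)
    (hφbound : ∀ b : ℝ, ‖φ ((a : ℂ) - (b : ℂ) * Complex.I)‖ ≤ φa)
    (hφNbound : ∀ b : ℝ,
      ‖φN ((a : ℂ) - (b : ℂ) * Complex.I)‖ ≤ (6 * C₀ + 1) * φa)
    (herr : ∀ b : ℝ, C₀ * (1 + b ^ 6) * eN ≤ 1 →
      ‖φ ((a : ℂ) - (b : ℂ) * Complex.I) -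
          φN ((a : ℂ) - (b : ℂ) * Complex.I)‖ ≤
        6 * C₀ * φa * (1 + b ^ 6) * eN)
    (hfhat : ∀ b : ℝ,
      ‖fhat ((b : ℂ) + (a : ℂ) * Complex.I)‖ ≤ C₁ * (1 + |b|) ^ (-(1 + δ)))
    (hint : Integrable (fun b : ℝ =>
      φ ((a : ℂ) - (b : ℂ) * Complex.I) * fhat ((b : ℂ) + (a : ℂ) * Complex.I)))
    (hintN : Integrable (fun b : ℝ =>
      φN ((a : ℂ) - (b : ℂ) * Complex.I) * fhat ((b : ℂ) + (a : ℂ) * Complex.I)))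
    (hpr : ((∫ ω, f (X ω) ∂μ : ℝ) : ℂ) = (1 / (2 * (Real.pi : ℂ))) *
      ∫ b : ℝ, φ ((a : ℂ) - (b : ℂ) * Complex.I) * fhat ((b : ℂ) + (a : ℂ) * Complex.I))
    (hprN : ((∫ ω, f (XN ω) ∂μ : ℝ) : ℂ) = (1 / (2 * (Real.pi : ℂ))) *
      ∫ b : ℝ, φN ((a : ℂ) - (b : ℂ) * Complex.I) * fhat ((b : ℂ) + (a : ℂ) * Complex.I)) :
    |(∫ ω, f (X ω) ∂μ) - ∫ ω, f (XN ω) ∂μ| ≤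
      (1 / (2 * Real.pi)) *
        ((2 ^ 7 * 6 * C₀ * C₁ * φa / (6 - δ)) * eN ^ ((δ + η) / (6 + η)) +
          (4 * C₁ / δ) * (3 * C₀ + 1) * 2 * φa * L ^ (-δ)) ∧
      ∃ C : ℝ, 0 ≤ C ∧
        |(∫ ω, f (X ω) ∂μ) - ∫ ω, f (XN ω) ∂μ| ≤ C * eN ^ (δ / (6 + η)) := by
  have hπ : (0:ℝ) < Real.pi := Real.pi_pos
  have hL0 : 0 < L := hLdef ▸ Real.rpow_pos_of_pos heN _
  have h6η : (0:ℝ) < 6 + η := by linarith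
  have h6δ : (0:ℝ) < 6 - δ := by linarith
  set g : ℝ → ℂ := fun b =>
    φ ((a : ℂ) - (b : ℂ) * Complex.I) * fhat ((b : ℂ) + (a : ℂ) * Complex.I) -
      φN ((a : ℂ) - (b : ℂ) * Complex.I) * fhat ((b : ℂ) + (a : ℂ) * Complex.I) with hg_def
  have hgint : Integrable g := hint.sub hintN
  -- Step 1: express the difference via the integral of g
  have hdiffC : (((∫ ω, f (X ω) ∂μ) - ∫ ω, f (XN ω) ∂μ : ℝ) : ℂ)
      = (1 / (2 * (Real.pi : ℂ))) * ∫ b : ℝ, g b := by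
    push_cast
    rw [hpr, hprN, ← mul_sub, integral_sub hint hintN]
  have habs : |(∫ ω, f (X ω) ∂μ) - ∫ ω, f (XN ω) ∂μ|
      = (1 / (2 * Real.pi)) * ‖∫ b : ℝ, g b‖ := by
    have h1 := congrArg (‖·‖) hdiffC
    rw [Complex.norm_real, Real.norm_eq_abs] at h1
    rw [h1, norm_mul]
    congr 1
    rw [norm_div, norm_one]
    congr 1
    rw [show (2 * (Real.pi : ℂ)) = ((2 * Real.pi : ℝ) : ℂ) by push_cast; ring,
      Complex.norm_real, Real.norm_eq_abs, abs_of_pos (by linarith)]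
  -- pointwise facts
  have hb_pos : ∀ b : ℝ, (0:ℝ) < 1 + |b| := fun b => by positivity
  have habs_g : ∀ b : ℝ, ‖g b‖ =
      ‖φ ((a : ℂ) - (b : ℂ) * Complex.I) - φN ((a : ℂ) - (b : ℂ) * Complex.I)‖ *
        ‖fhat ((b : ℂ) + (a : ℂ) * Complex.I)‖ := by
    intro b
    rw [hg_def]
    simp only
    rw [← sub_mul, norm_mul]
  set D : ℝ → ℝ := fun b => (6 * C₀ + 2) * φa * C₁ * (1 + |b|) ^ (-(1 + δ)) with hD_def
  have hDint : Integrable D := (aux_integrable_one_add_abs hδ).const_mul _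
  have hD_bound : ∀ b : ℝ, ‖g b‖ ≤ D b := by
    intro b
    rw [habs_g b, hD_def]
    have h1 : ‖φ ((a : ℂ) - (b : ℂ) * Complex.I) -
        φN ((a : ℂ) - (b : ℂ) * Complex.I)‖ ≤ (6 * C₀ + 2) * φa := by
      calc ‖φ ((a : ℂ) - (b : ℂ) * Complex.I) -
            φN ((a : ℂ) - (b : ℂ) * Complex.I)‖
          ≤ ‖φ ((a : ℂ) - (b : ℂ) * Complex.I)‖ +
            ‖φN ((a : ℂ) - (b : ℂ) * Complex.I)‖ := by
            exact norm_sub_le _ _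
        _ ≤ φa + (6 * C₀ + 1) * φa := add_le_add (hφbound b) (hφNbound b)
        _ = (6 * C₀ + 2) * φa := by ring
    calc ‖φ ((a : ℂ) - (b : ℂ) * Complex.I) -
          φN ((a : ℂ) - (b : ℂ) * Complex.I)‖ *
          ‖fhat ((b : ℂ) + (a : ℂ) * Complex.I)‖
        ≤ ((6 * C₀ + 2) * φa) * (C₁ * (1 + |b|) ^ (-(1 + δ))) :=
          mul_le_mul h1 (hfhat b) (norm_nonneg _)
            (by have := mul_nonneg (by linarith : (0:ℝ) ≤ 6 * C₀ + 2) hφa; linarith)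
      _ = (6 * C₀ + 2) * φa * C₁ * (1 + |b|) ^ (-(1 + δ)) := by ring
  have hM0 : (0:ℝ) ≤ 6 * C₀ * C₁ * φa * eN := by
    have : (0:ℝ) ≤ 6 * C₀ * C₁ := by positivity
    exact mul_nonneg (mul_nonneg this hφa) heN.le
  have hNear : ∀ b ∈ Set.Icc (-L) L,
      ‖g b‖ ≤ 6 * C₀ * C₁ * φa * eN * (1 + |b|) ^ (5 - δ) := by
    intro b hb
    have hbL : |b| ≤ L := abs_le.mpr ⟨hb.1, hb.2⟩
    have hb6abs : |b| ^ 6 ≤ L ^ 6 := pow_le_pow_left₀ (abs_nonneg b) hbL 6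
    have hb6 : b ^ 6 ≤ L ^ 6 := by
      calc b ^ 6 ≤ |b ^ 6| := le_abs_self _
        _ = |b| ^ 6 := abs_pow b 6
        _ ≤ L ^ 6 := hb6abs
    have hb6nn : (0:ℝ) ≤ b ^ 6 := by positivity
    have hcond : C₀ * (1 + b ^ 6) * eN ≤ 1 := by
      refine le_trans ?_ hsmall
      have h1 : (1 + b ^ 6) ≤ (1 + L ^ 6) := by linarith
      have := mul_le_mul_of_nonneg_left h1 hC₀.le
      exact mul_le_mul_of_nonneg_right this heN.le
    have h1 := herr b hcond
    have h2 := hfhat b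
    rw [habs_g b]
    have hle : ‖φ ((a : ℂ) - (b : ℂ) * Complex.I) -
        φN ((a : ℂ) - (b : ℂ) * Complex.I)‖ *
        ‖fhat ((b : ℂ) + (a : ℂ) * Complex.I)‖
        ≤ (6 * C₀ * φa * (1 + b ^ 6) * eN) * (C₁ * (1 + |b|) ^ (-(1 + δ))) :=
      mul_le_mul h1 h2 (norm_nonneg _)
        (by
          have h0 : (0:ℝ) ≤ 6 * C₀ * φa := by
            have : (0:ℝ) ≤ 6 * C₀ := by positivity
            exact mul_nonneg this hφa
          have : (0:ℝ) ≤ 6 * C₀ * φa * (1 + b ^ 6) := mul_nonneg h0 (by linarith)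
          exact mul_nonneg this heN.le)
    refine hle.trans ?_
    have h6 : (1 + b ^ 6 : ℝ) ≤ (1 + |b|) ^ (6:ℕ) := by
      have hx := aux_one_add_pow6 |b| (abs_nonneg b)
      have : b ^ 6 ≤ |b| ^ 6 := by
        calc b ^ 6 ≤ |b ^ 6| := le_abs_self _
          _ = |b| ^ 6 := abs_pow b 6
      linarith
    have hsplit : ((1 + |b|) : ℝ) ^ (6:ℕ) * (1 + |b|) ^ (-(1 + δ)) = (1 + |b|) ^ (5 - δ) := by
      rw [← Real.rpow_natCast (1 + |b|) 6, ← Real.rpow_add (hb_pos b)]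
      congr 1
      push_cast
      ring
    have hstep : (6 * C₀ * φa * (1 + b ^ 6) * eN) * (C₁ * (1 + |b|) ^ (-(1 + δ)))
        ≤ (6 * C₀ * φa * ((1 + |b|) ^ (6:ℕ)) * eN) * (C₁ * (1 + |b|) ^ (-(1 + δ))) := by
      have h0 : (0:ℝ) ≤ 6 * C₀ * φa := by
        have : (0:ℝ) ≤ 6 * C₀ := by positivity
        exact mul_nonneg this hφa
      have hrp : (0:ℝ) ≤ C₁ * (1 + |b|) ^ (-(1 + δ)) := by positivity
      apply mul_le_mul_of_nonneg_right _ hrp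
      apply mul_le_mul_of_nonneg_right _ heN.le
      exact mul_le_mul_of_nonneg_left h6 h0
    refine hstep.trans (le_of_eq ?_)
    rw [← hsplit]
    ring
  -- key integral bound
  have key : (∫ b : ℝ, ‖g b‖) ≤
      (2 ^ 7 * 6 * C₀ * C₁ * φa / (6 - δ)) * eN ^ ((δ + η) / (6 + η)) +
        (4 * C₁ / δ) * (3 * C₀ + 1) * 2 * φa * L ^ (-δ) := by
    have hA0 : (0:ℝ) ≤ (2 ^ 7 * 6 * C₀ * C₁ * φa / (6 - δ)) * eN ^ ((δ + η) / (6 + η)) := by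
      apply mul_nonneg _ (Real.rpow_nonneg heN.le _)
      apply div_nonneg _ h6δ.le
      have : (0:ℝ) ≤ 2 ^ 7 * 6 * C₀ * C₁ := by positivity
      exact mul_nonneg this hφa
    rcases lt_or_ge L 1 with hL1 | hL1
    · -- small L: crude bound over the whole line
      have h1 : (∫ b : ℝ, ‖g b‖) ≤ ∫ b : ℝ, D b :=
        integral_mono hgint.norm hDint hD_bound
      have h2 : (∫ b : ℝ, D b) = (6 * C₀ + 2) * φa * C₁ * (2 * (1 / δ)) := by
        rw [hD_def, integral_const_mul, aux_integral_full hδ]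
      have hL' : 1 ≤ L ^ (-δ) :=
        Real.one_le_rpow_of_pos_of_le_one_of_nonpos hL0 hL1.le (by linarith)
      have h3 : (6 * C₀ + 2) * φa * C₁ * (2 * (1 / δ)) ≤
          (4 * C₁ / δ) * (3 * C₀ + 1) * 2 * φa * L ^ (-δ) := by
        have hb1 : (6 * C₀ + 2) * φa * C₁ * (2 * (1 / δ)) =
            ((12 * C₀ + 4) * φa * C₁) * (1 / δ) := by ring
        have hb2 : (4 * C₁ / δ) * (3 * C₀ + 1) * 2 * φa =
            ((24 * C₀ + 8) * φa * C₁) * (1 / δ) := by field_simp; ring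
        have hcoef : ((12 * C₀ + 4) * φa * C₁) * (1 / δ) ≤
            ((24 * C₀ + 8) * φa * C₁) * (1 / δ) := by
          apply mul_le_mul_of_nonneg_right _ (by positivity)
          have h0 : (0:ℝ) ≤ φa * C₁ := mul_nonneg hφa hC₁.le
          nlinarith
        have hnn : (0:ℝ) ≤ (4 * C₁ / δ) * (3 * C₀ + 1) * 2 * φa := by
          have : (0:ℝ) ≤ (4 * C₁ / δ) * (3 * C₀ + 1) * 2 := by positivity
          exact mul_nonneg this hφa
        calc (6 * C₀ + 2) * φa * C₁ * (2 * (1 / δ))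
            = ((12 * C₀ + 4) * φa * C₁) * (1 / δ) := hb1
          _ ≤ ((24 * C₀ + 8) * φa * C₁) * (1 / δ) := hcoef
          _ = (4 * C₁ / δ) * (3 * C₀ + 1) * 2 * φa * 1 := by rw [hb2]; ring
          _ ≤ (4 * C₁ / δ) * (3 * C₀ + 1) * 2 * φa * L ^ (-δ) :=
              mul_le_mul_of_nonneg_left hL' hnn
      rw [h2] at h1
      linarith [h1, h3]
    · -- large L: split into near and far parts
      have hsplit : (∫ b : ℝ, ‖g b‖) =
          (∫ b in Set.Icc (-L) L, ‖g b‖) + ∫ b in (Set.Icc (-L) L)ᶜ, ‖g b‖ :=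
        (integral_add_compl measurableSet_Icc hgint.norm).symm
      -- near part
      have hcontN : Continuous (fun x : ℝ => 6 * C₀ * C₁ * φa * eN * (1 + |x|) ^ (5 - δ)) := by
        apply continuous_const.mul
        exact Continuous.rpow_const (continuous_const.add continuous_abs) (fun x => Or.inl (by positivity))
      have hnear1 : (∫ b in Set.Icc (-L) L, ‖g b‖) ≤
          ∫ b in Set.Icc (-L) L, 6 * C₀ * C₁ * φa * eN * (1 + |b|) ^ (5 - δ) :=
        setIntegral_mono_on hgint.norm.integrableOn (hcontN.integrableOn_Icc)
          measurableSet_Icc hNear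
      have hnear2 : (∫ b in Set.Icc (-L) L, 6 * C₀ * C₁ * φa * eN * (1 + |b|) ^ (5 - δ))
          = 6 * C₀ * C₁ * φa * eN * (2 * ((1 + L) ^ (6 - δ) - 1) / (6 - δ)) := by
        rw [integral_const_mul, aux_integral_Icc hδ6 (by linarith : (0:ℝ) ≤ L)]
      have hpow1 : (1 + L) ^ (6 - δ) ≤ 2 ^ 6 * L ^ (6 - δ) := by
        calc (1 + L) ^ (6 - δ) ≤ (2 * L) ^ (6 - δ) :=
              Real.rpow_le_rpow (by linarith) (by linarith) h6δ.le
          _ = 2 ^ (6 - δ) * L ^ (6 - δ) := Real.mul_rpow (by norm_num) hL0.le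
          _ ≤ 2 ^ (6:ℝ) * L ^ (6 - δ) := by
              apply mul_le_mul_of_nonneg_right
                (Real.rpow_le_rpow_of_exponent_le one_le_two (by linarith))
                (Real.rpow_nonneg hL0.le _)
          _ = 2 ^ 6 * L ^ (6 - δ) := by
              norm_num [show ((6:ℝ)) = ((6:ℕ):ℝ) by norm_num, Real.rpow_natCast]
      have heNL : eN * L ^ (6 - δ) = eN ^ ((δ + η) / (6 + η)) := by
        rw [hLdef, ← Real.rpow_mul heN.le]
        rw [show eN * eN ^ (-(1 / (6 + η)) * (6 - δ)) =
            eN ^ ((1:ℝ)) * eN ^ (-(1 / (6 + η)) * (6 - δ)) by rw [Real.rpow_one],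
          ← Real.rpow_add heN]
        congr 1
        field_simp
        ring
      have hnear3 : 6 * C₀ * C₁ * φa * eN * (2 * ((1 + L) ^ (6 - δ) - 1) / (6 - δ))
          ≤ (2 ^ 7 * 6 * C₀ * C₁ * φa / (6 - δ)) * eN ^ ((δ + η) / (6 + η)) := by
        rw [← heNL]
        have hstep : 2 * ((1 + L) ^ (6 - δ) - 1) / (6 - δ) ≤ 2 ^ 7 * L ^ (6 - δ) / (6 - δ) := by
          apply div_le_div_of_nonneg_right _ h6δ.le
          nlinarith [hpow1]
        calc 6 * C₀ * C₁ * φa * eN * (2 * ((1 + L) ^ (6 - δ) - 1) / (6 - δ))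
            ≤ 6 * C₀ * C₁ * φa * eN * (2 ^ 7 * L ^ (6 - δ) / (6 - δ)) :=
              mul_le_mul_of_nonneg_left hstep hM0
          _ = (2 ^ 7 * 6 * C₀ * C₁ * φa / (6 - δ)) * (eN * L ^ (6 - δ)) := by
              field_simp
      -- far part
      have hcompl : (Set.Icc (-L) L)ᶜ = Set.Iio (-L) ∪ Set.Ioi L := by
        ext x
        simp only [Set.mem_compl_iff, Set.mem_Icc, not_and_or, not_le, Set.mem_union,
          Set.mem_Iio, Set.mem_Ioi]
      have hfar1 : (∫ b in (Set.Icc (-L) L)ᶜ, ‖g b‖) ≤ ∫ b in (Set.Icc (-L) L)ᶜ, D b :=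
        setIntegral_mono_on hgint.norm.integrableOn hDint.integrableOn
          measurableSet_Icc.compl (fun b _ => hD_bound b)
      have hIoi_val : (∫ b in Set.Ioi L, D b) =
          (6 * C₀ + 2) * φa * C₁ * ((1 + L) ^ (-δ) / δ) := by
        rw [hD_def, integral_const_mul]
        congr 1
        rw [setIntegral_congr_fun measurableSet_Ioi
          (fun x hx => by
            rw [abs_of_nonneg (le_of_lt (lt_of_lt_of_le hL0 (le_of_lt hx)))]),
          aux_integral_Ioi hδ (by linarith : (0:ℝ) ≤ L)]
      have hIio_val : (∫ b in Set.Iio (-L), D b) = ∫ b in Set.Ioi L, D b := by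
        rw [setIntegral_congr_set Iio_ae_eq_Iic]
        have hneg := integral_comp_neg_Iic (-L) D
        rw [neg_neg] at hneg
        rw [← hneg]
        refine setIntegral_congr_fun measurableSet_Iic (fun x _ => ?_)
        simp [hD_def, abs_neg]
      have hdisj : Disjoint (Set.Iio (-L)) (Set.Ioi L) :=
        (Set.Iic_disjoint_Ioi (by linarith : -L ≤ L)).mono_left Set.Iio_subset_Iic_self
      have hfar2 : (∫ b in (Set.Icc (-L) L)ᶜ, D b) =
          2 * ((6 * C₀ + 2) * φa * C₁ * ((1 + L) ^ (-δ) / δ)) := by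
        rw [hcompl, setIntegral_union hdisj measurableSet_Ioi hDint.integrableOn
          hDint.integrableOn, hIio_val, hIoi_val]
        ring
      have hmonoL : (1 + L) ^ (-δ) ≤ L ^ (-δ) :=
        Real.rpow_le_rpow_of_nonpos hL0 (by linarith) (by linarith)
      have hfar3 : 2 * ((6 * C₀ + 2) * φa * C₁ * ((1 + L) ^ (-δ) / δ)) ≤
          (4 * C₁ / δ) * (3 * C₀ + 1) * 2 * φa * L ^ (-δ) := by
        have h0 : (0:ℝ) ≤ (6 * C₀ + 2) * φa * C₁ :=
          mul_nonneg (mul_nonneg (by linarith) hφa) hC₁.le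
        have h1 : 2 * ((6 * C₀ + 2) * φa * C₁ * ((1 + L) ^ (-δ) / δ)) ≤
            2 * ((6 * C₀ + 2) * φa * C₁ * (L ^ (-δ) / δ)) := by
          apply mul_le_mul_of_nonneg_left _ (by norm_num)
          apply mul_le_mul_of_nonneg_left _ h0
          exact div_le_div_of_nonneg_right hmonoL hδ.le
        refine h1.trans ?_
        have heq : (4 * C₁ / δ) * (3 * C₀ + 1) * 2 * φa * L ^ (-δ) =
            2 * (2 * ((6 * C₀ + 2) * φa * C₁ * (L ^ (-δ) / δ))) := by
          field_simp
          ring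
        rw [heq]
        have hnn : (0:ℝ) ≤ 2 * ((6 * C₀ + 2) * φa * C₁ * (L ^ (-δ) / δ)) := by
          apply mul_nonneg (by norm_num)
          apply mul_nonneg h0
          positivity
        linarith
      rw [hnear2] at hnear1
      rw [hfar2] at hfar1
      linarith [hsplit, hnear1, hfar1, hnear3, hfar3]
  -- assemble conjunct 1
  have hmain : |(∫ ω, f (X ω) ∂μ) - ∫ ω, f (XN ω) ∂μ| ≤
      (1 / (2 * Real.pi)) *
        ((2 ^ 7 * 6 * C₀ * C₁ * φa / (6 - δ)) * eN ^ ((δ + η) / (6 + η)) +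
          (4 * C₁ / δ) * (3 * C₀ + 1) * 2 * φa * L ^ (-δ)) := by
    rw [habs]
    apply mul_le_mul_of_nonneg_left _ (by positivity)
    exact (norm_integral_le_integral_norm g).trans key
  refine ⟨hmain, ?_⟩
  -- conjunct 2
  set A := 2 ^ 7 * 6 * C₀ * C₁ * φa / (6 - δ) with hA_def
  set B := (4 * C₁ / δ) * (3 * C₀ + 1) * 2 * φa with hB_def
  have hA0 : 0 ≤ A := by
    apply div_nonneg _ h6δ.le
    have : (0:ℝ) ≤ 2 ^ 7 * 6 * C₀ * C₁ := by positivity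
    exact mul_nonneg this hφa
  have hB0 : 0 ≤ B := by
    have : (0:ℝ) ≤ (4 * C₁ / δ) * (3 * C₀ + 1) * 2 := by positivity
    exact mul_nonneg this hφa
  have hLpow : L ^ (-δ) = eN ^ (δ / (6 + η)) := by
    rw [hLdef, ← Real.rpow_mul heN.le]
    congr 1
    field_simp
  have hL6eN : L ^ 6 * eN = eN ^ (η / (6 + η)) := by
    rw [hLdef, ← Real.rpow_natCast (eN ^ (-(1 / (6 + η)))) 6, ← Real.rpow_mul heN.le]
    rw [show eN ^ (-(1 / (6 + η)) * (6:ℕ)) * eN =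
        eN ^ (-(1 / (6 + η)) * (6:ℕ)) * eN ^ ((1:ℝ)) by rw [Real.rpow_one],
      ← Real.rpow_add heN]
    congr 1
    push_cast
    field_simp
    ring
  have hq0 : C₀ * (L ^ 6 * eN) ≤ 1 := by nlinarith [mul_pos hC₀ heN]
  have hq : eN ^ (η / (6 + η)) ≤ 1 / C₀ := by
    rw [← hL6eN, le_div_iff₀ hC₀]
    nlinarith [hq0]
  have hsum : eN ^ ((δ + η) / (6 + η)) = eN ^ (δ / (6 + η)) * eN ^ (η / (6 + η)) := by
    rw [← Real.rpow_add heN]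
    congr 1
    field_simp
  refine ⟨(1 / (2 * Real.pi)) * (A * (1 / C₀) + B), ?_, ?_⟩
  · have : (0:ℝ) ≤ A * (1 / C₀) + B := by
      have : (0:ℝ) ≤ A * (1 / C₀) := mul_nonneg hA0 (by positivity)
      linarith
    positivity
  · refine hmain.trans ?_
    have hp2 : (0:ℝ) ≤ eN ^ (δ / (6 + η)) := Real.rpow_nonneg heN.le _
    have h1 : A * eN ^ ((δ + η) / (6 + η)) ≤ A * (1 / C₀) * eN ^ (δ / (6 + η)) := by
      rw [hsum]
      have := mul_le_mul_of_nonneg_left hq (mul_nonneg hA0 hp2)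
      calc A * (eN ^ (δ / (6 + η)) * eN ^ (η / (6 + η)))
          = (A * eN ^ (δ / (6 + η))) * eN ^ (η / (6 + η)) := by ring
        _ ≤ (A * eN ^ (δ / (6 + η))) * (1 / C₀) := this
        _ = A * (1 / C₀) * eN ^ (δ / (6 + η)) := by ring
    have hstep : A * eN ^ ((δ + η) / (6 + η)) + B * L ^ (-δ)
        ≤ (A * (1 / C₀) + B) * eN ^ (δ / (6 + η)) := by
      rw [hLpow]
      nlinarith [h1]
    have hfin := mul_le_mul_of_nonneg_left hstep
      (by positivity : (0:ℝ) ≤ 1 / (2 * Real.pi))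
    exact hfin.trans_eq (by ring)
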